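/- Every graph G that is 3-Ramsey for K_3 is also 3-Ramsey for K_3 + K_2; that is, every 3-edge-colouring of G contains a monochromatic triangle together with a vertex-disjoint edge of the same colour. -/

import Mathlib

open SimpleGraph

/-- The vertex-disjoint union `K_n + K_m` of two complete graphs. -/
def cliqueSum (n m : ℕ) : SimpleGraph (Fin n ⊕ Fin m) :=
  SimpleGraph.fromRel fun x y =>
    (∃ a b, x = Sum.inl a ∧ y = Sum.inl b) ∨ (∃ a b, x = Sum.inr a ∧ y = Sum.inr b)

/-- There is a copy of `H` in `G` that is monochromatic in colour `i`
under the edge-colouring `c`. -/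
def MonoCopy {V W : Type*} {r : ℕ} (G : SimpleGraph V) (H : SimpleGraph W)
    (c : Sym2 V → Fin r) (i : Fin r) : Prop :=
  ∃ f : H →g G, Function.Injective f ∧ ∀ u v, H.Adj u v → c s(f u, f v) = i

/-- `G` is `r`-Ramsey for `H`: every `r`-colouring of the edges of `G`
admits a monochromatic copy of `H`. -/
def IsRamseyFor {V W : Type*} (r : ℕ) (G : SimpleGraph V) (H : SimpleGraph W) : Prop :=
  ∀ c : Sym2 V → Fin r, ∃ i : Fin r, MonoCopy G H c i

/-- `G₁` and `G₂` are `r`-Ramsey equivalent. -/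
def RamseyEquiv {V W : Type*} (r : ℕ) (G₁ : SimpleGraph V) (G₂ : SimpleGraph W) : Prop :=
  ∀ {U : Type*} (G : SimpleGraph U), IsRamseyFor r G G₁ ↔ IsRamseyFor r G G₂

/-- `N` has the Ramsey property for clique sizes `n : Fin r → ℕ`: every `r`-colouring of
the edges of `K_N` admits a colour `i` and an `i`-monochromatic clique of size `n i`. -/
def HasRamseyProp (N : ℕ) {r : ℕ} (n : Fin r → ℕ) : Prop :=
  ∀ c : Sym2 (Fin N) → Fin r, ∃ i : Fin r, ∃ s : Finset (Fin N),
    s.card = n i ∧ ∀ u ∈ s, ∀ v ∈ s, u ≠ v → c s(u, v) = i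

/-- The Ramsey number `R_r(n 0, …, n (r-1))`. -/
noncomputable def ramseyNumber {r : ℕ} (n : Fin r → ℕ) : ℕ :=
  sInf {N | HasRamseyProp N n}

section gadget

def gm0 : Fin 10 → Fin 10 → Fin 3 :=
  ![![0, 2, 1, 0, 0, 0, 0, 0, 0, 0], ![2, 0, 1, 0, 0, 0, 0, 0, 0, 0], ![1, 1, 0, 0, 0, 0, 0, 0, 0, 0],
    ![0, 0, 0, 0, 0, 0, 0, 0, 0, 0], ![0, 0, 0, 0, 0, 0, 0, 0, 0, 0], ![0, 0, 0, 0, 0, 0, 0, 0, 0, 0],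
    ![0, 0, 0, 0, 0, 0, 0, 0, 0, 0], ![0, 0, 0, 0, 0, 0, 0, 0, 0, 0], ![0, 0, 0, 0, 0, 0, 0, 0, 0, 0],
    ![0, 0, 0, 0, 0, 0, 0, 0, 0, 0]]
def gm1 : Fin 10 → Fin 10 → Fin 3 :=
  ![![0, 0, 0, 0, 0, 0, 0, 0, 0, 0], ![0, 0, 0, 0, 0, 0, 0, 0, 0, 0], ![0, 0, 0, 0, 0, 0, 0, 0, 0, 0],
    ![0, 0, 0, 0, 0, 2, 0, 0, 0, 1], ![0, 0, 0, 0, 0, 0, 0, 0, 0, 1], ![0, 0, 0, 2, 0, 0, 0, 0, 0, 1],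
    ![0, 0, 0, 0, 0, 0, 0, 0, 0, 0], ![0, 0, 0, 0, 0, 0, 0, 0, 0, 0], ![0, 0, 0, 0, 0, 0, 0, 0, 0, 0],
    ![0, 0, 0, 1, 1, 1, 0, 0, 0, 0]]
def gm2 : Fin 10 → Fin 10 → Fin 3 :=
  ![![0, 0, 0, 0, 0, 0, 0, 0, 0, 0], ![0, 0, 0, 0, 0, 0, 0, 0, 0, 0], ![0, 0, 0, 0, 0, 0, 0, 0, 0, 0],
    ![0, 0, 0, 0, 0, 0, 0, 0, 0, 0], ![0, 0, 0, 0, 0, 0, 0, 0, 0, 0], ![0, 0, 0, 0, 0, 0, 0, 0, 0, 0],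
    ![0, 0, 0, 0, 0, 0, 0, 0, 1, 2], ![0, 0, 0, 0, 0, 0, 0, 0, 1, 2], ![0, 0, 0, 0, 0, 0, 1, 1, 0, 2],
    ![0, 0, 0, 0, 0, 0, 2, 2, 2, 0]]
def gm01 : Fin 10 → Fin 10 → Fin 3 :=
  ![![0, 0, 2, 0, 0, 0, 0, 0, 0, 1], ![0, 0, 1, 2, 2, 1, 0, 0, 0, 0], ![2, 1, 0, 1, 0, 2, 0, 0, 0, 0],
    ![0, 2, 1, 0, 1, 1, 0, 0, 0, 0], ![0, 2, 0, 1, 0, 2, 0, 0, 0, 1], ![0, 1, 2, 1, 2, 0, 0, 0, 0, 1],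
    ![0, 0, 0, 0, 0, 0, 0, 0, 0, 0], ![0, 0, 0, 0, 0, 0, 0, 0, 0, 0], ![0, 0, 0, 0, 0, 0, 0, 0, 0, 0],
    ![1, 0, 0, 0, 1, 1, 0, 0, 0, 0]]
def gm02 : Fin 10 → Fin 10 → Fin 3 :=
  ![![0, 0, 2, 0, 0, 0, 0, 0, 0, 2], ![0, 0, 0, 0, 0, 0, 2, 1, 2, 2], ![2, 0, 0, 0, 0, 0, 1, 1, 2, 0],
    ![0, 0, 0, 0, 0, 0, 0, 0, 0, 0], ![0, 0, 0, 0, 0, 0, 0, 0, 0, 0], ![0, 0, 0, 0, 0, 0, 0, 0, 0, 0],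
    ![0, 2, 1, 0, 0, 0, 0, 2, 1, 0], ![0, 1, 1, 0, 0, 0, 2, 0, 1, 0], ![0, 2, 2, 0, 0, 0, 1, 1, 0, 0],
    ![2, 2, 0, 0, 0, 0, 0, 0, 0, 0]]
def gm12 : Fin 10 → Fin 10 → Fin 3 :=
  ![![0, 0, 0, 0, 0, 0, 0, 0, 0, 0], ![0, 0, 0, 0, 0, 0, 0, 0, 0, 0], ![0, 0, 0, 0, 0, 0, 0, 0, 0, 0],
    ![0, 0, 0, 0, 0, 2, 0, 0, 0, 1], ![0, 0, 0, 0, 0, 1, 2, 2, 1, 1], ![0, 0, 0, 2, 1, 0, 1, 0, 0, 2],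
    ![0, 0, 0, 0, 2, 1, 0, 1, 2, 1], ![0, 0, 0, 0, 2, 0, 1, 0, 1, 2], ![0, 0, 0, 0, 1, 0, 2, 1, 0, 2],
    ![0, 0, 0, 1, 1, 2, 1, 2, 2, 0]]
def gm012 : Fin 10 → Fin 10 → Fin 3 :=
  ![![0, 0, 1, 1, 2, 2, 2, 1, 0, 2], ![0, 0, 1, 1, 2, 2, 1, 2, 2, 0], ![1, 1, 0, 0, 2, 1, 2, 2, 0, 1],
    ![1, 1, 0, 0, 1, 2, 2, 2, 1, 0], ![2, 2, 2, 1, 0, 0, 1, 1, 0, 1], ![2, 2, 1, 2, 0, 0, 1, 1, 1, 0],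
    ![2, 1, 2, 2, 1, 1, 0, 0, 2, 0], ![1, 2, 2, 2, 1, 1, 0, 0, 0, 2], ![0, 2, 0, 1, 0, 1, 2, 0, 0, 0],
    ![2, 0, 1, 0, 1, 0, 0, 2, 0, 0]]

def gmat (b : Fin 3 → Bool) : Fin 10 → Fin 10 → Fin 3 :=
  match b 0, b 1, b 2 with
  | true, false, false => gm0
  | false, true, false => gm1
  | false, false, true => gm2
  | true, true, false => gm01
  | true, false, true => gm02
  | false, true, true => gm12
  | _, _, _ => gm012

def scol (u : Fin 10) : Fin 3 := ⟨u.val / 3 % 3, Nat.mod_lt _ (by norm_num)⟩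

def gok (b : Fin 3 → Bool) (u : Fin 10) : Bool := (u == 9) || b (scol u)

theorem gadget_sym : ∀ b : Fin 3 → Bool, ∀ u v : Fin 10, gmat b u v = gmat b v u := by decide

theorem gadget_star : ∀ b : Fin 3 → Bool, ∀ u : Fin 10, u ≠ 9 → b (scol u) = true →
    b (gmat b u 9) = true := by decide

set_option maxRecDepth 10000 in
theorem gadget_tri : ∀ b : Fin 3 → Bool, ∀ p q r : Fin 10, p ≠ q → p ≠ r → q ≠ r →
    gok b p = true → gok b q = true → gok b r = true →
    ¬(gmat b p q = gmat b q r ∧ gmat b p r = gmat b q r) := by decide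

end gadget

def Tri {V : Type*} (G : SimpleGraph V) (c : Sym2 V → Fin 3) (i : Fin 3) (a b d : V) : Prop :=
  G.Adj a b ∧ G.Adj a d ∧ G.Adj b d ∧ c s(a,b) = i ∧ c s(a,d) = i ∧ c s(b,d) = i

lemma tri_of_mono {V : Type*} {G : SimpleGraph V} {c : Sym2 V → Fin 3} {i : Fin 3}
    (h : MonoCopy G (completeGraph (Fin 3)) c i) : ∃ a b d, Tri G c i a b d := by
  obtain ⟨f, _, hmono⟩ := h
  have adj : ∀ x y : Fin 3, x ≠ y → (completeGraph (Fin 3)).Adj x y := by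
    intro x y hxy; simpa [completeGraph] using hxy
  exact ⟨f 0, f 1, f 2, f.map_adj (adj 0 1 (by decide)), f.map_adj (adj 0 2 (by decide)),
    f.map_adj (adj 1 2 (by decide)),
    hmono 0 1 (adj 0 1 (by decide)), hmono 0 2 (adj 0 2 (by decide)),
    hmono 1 2 (adj 1 2 (by decide))⟩

lemma cs_adj_ll (x y : Fin 3) : (cliqueSum 3 2).Adj (Sum.inl x) (Sum.inl y) ↔ x ≠ y := by
  simp [cliqueSum, fromRel_adj]

lemma cs_adj_rr (x y : Fin 2) : (cliqueSum 3 2).Adj (Sum.inr x) (Sum.inr y) ↔ x ≠ y := by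
  simp [cliqueSum, fromRel_adj]
  revert x y; decide

lemma cs_adj_lr (x : Fin 3) (y : Fin 2) : ¬ (cliqueSum 3 2).Adj (Sum.inl x) (Sum.inr y) := by
  simp [cliqueSum, fromRel_adj]

lemma cs_adj_rl (x : Fin 2) (y : Fin 3) : ¬ (cliqueSum 3 2).Adj (Sum.inr x) (Sum.inl y) := by
  simp [cliqueSum, fromRel_adj]

lemma mk_K32 {V : Type*} {G : SimpleGraph V} {c : Sym2 V → Fin 3} {i : Fin 3} {a b d p q : V}
    (t : Tri G c i a b d) (hpq : G.Adj p q) (hcol : c s(p,q) = i)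
    (hpa : p ≠ a) (hpb : p ≠ b) (hpd : p ≠ d)
    (hqa : q ≠ a) (hqb : q ≠ b) (hqd : q ≠ d) :
    MonoCopy G (cliqueSum 3 2) c i := by
  obtain ⟨hab, had, hbd, cab, cad, cbd⟩ := t
  have hne_pq := hpq.ne
  refine ⟨⟨Sum.elim ![a,b,d] ![p,q], ?_⟩, ?_, ?_⟩
  · rintro (x|x) (y|y) hxy
    · rw [cs_adj_ll] at hxy
      fin_cases x <;> fin_cases y <;>
        simp only [Sum.elim_inl, Matrix.cons_val_zero, Matrix.cons_val_one, Matrix.head_cons,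
          Matrix.cons_val_two, Matrix.tail_cons] <;>
        first
          | exact absurd rfl hxy
          | exact hab | exact hab.symm | exact had | exact had.symm
          | exact hbd | exact hbd.symm
    · exact absurd hxy (cs_adj_lr _ _)
    · exact absurd hxy (cs_adj_rl _ _)
    · rw [cs_adj_rr] at hxy
      fin_cases x <;> fin_cases y <;>
        simp only [Sum.elim_inr, Matrix.cons_val_zero, Matrix.cons_val_one, Matrix.head_cons] <;>
        first
          | exact absurd rfl hxy
          | exact hpq | exact hpq.symm
  · have hne_ab := hab.ne; have hne_ad := had.ne; have hne_bd := hbd.ne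
    rintro (x|x) (y|y) hxy <;>
      fin_cases x <;> fin_cases y <;> simp_all [Sum.elim_inl, Sum.elim_inr] <;>
      first
        | rfl
        | (exact absurd hxy.symm (by assumption))
        | (exact absurd hxy (by assumption))
  · rintro (x|x) (y|y) hxy
    · rw [cs_adj_ll] at hxy
      fin_cases x <;> fin_cases y <;>
        simp only [Sum.elim_inl, Matrix.cons_val_zero, Matrix.cons_val_one, Matrix.head_cons,
          Matrix.cons_val_two, Matrix.tail_cons] <;>
        first
          | exact absurd rfl hxy
          | exact cab | exact (Sym2.eq_swap ▸ cab) | exact cad | exact (Sym2.eq_swap ▸ cad)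
          | exact cbd | exact (Sym2.eq_swap ▸ cbd)
    · exact absurd hxy (cs_adj_lr _ _)
    · exact absurd hxy (cs_adj_rl _ _)
    · rw [cs_adj_rr] at hxy
      fin_cases x <;> fin_cases y <;>
        simp only [Sum.elim_inr, Matrix.cons_val_zero, Matrix.cons_val_one, Matrix.head_cons] <;>
        first
          | exact absurd rfl hxy
          | exact hcol | exact (Sym2.eq_swap ▸ hcol)

lemma main_aux {V : Type*} (G : SimpleGraph V) (c : Sym2 V → Fin 3)
    (hG : IsRamseyFor 3 G (completeGraph (Fin 3)))
    (h : ∀ i, ¬ MonoCopy G (cliqueSum 3 2) c i) : False := by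
  classical
  -- no monochromatic triangle + disjoint same-coloured edge
  have F1 : ∀ (i : Fin 3) (a b d p q : V), Tri G c i a b d → G.Adj p q → c s(p,q) = i →
      p ≠ a → p ≠ b → p ≠ d → q ≠ a → q ≠ b → q ≠ d → False := by
    intro i a b d p q ht hadj hcol h1 h2 h3 h4 h5 h6
    exact h i (mk_K32 ht hadj hcol h1 h2 h3 h4 h5 h6)
  set alive : Fin 3 → Prop := fun i => ∃ a b d : V, Tri G c i a b d with halive
  obtain ⟨i0, m0⟩ := hG c
  obtain ⟨a0, b0, d0, t0⟩ := tri_of_mono m0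
  -- chosen triangles
  have hex : ∀ i : Fin 3, ∃ a b d : V, alive i → Tri G c i a b d := by
    intro i
    by_cases hi : alive i
    · obtain ⟨a, b, d, ht⟩ := hi
      exact ⟨a, b, d, fun _ => ht⟩
    · exact ⟨a0, a0, a0, fun hc => absurd hc hi⟩
  choose X Y Z hT using hex
  -- the boolean vector of alive colours
  obtain ⟨bf, hb⟩ : ∃ bf : Fin 3 → Bool, ∀ i, bf i = true ↔ alive i :=
    ⟨fun i => decide (alive i), fun i => decide_eq_true_iff⟩
  -- the projection map
  obtain ⟨φ, hvert, hφcol, hφinj⟩ :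
      ∃ φ : V → Fin 10,
        (∀ i, alive i → φ (X i) ≠ 9 ∧ φ (Y i) ≠ 9 ∧ φ (Z i) ≠ 9) ∧
        (∀ v, φ v ≠ 9 → bf (scol (φ v)) = true) ∧
        (∀ u v, φ u ≠ 9 → φ u = φ v → u = v) := by
    set verts : Fin 9 → V := ![X 0, Y 0, Z 0, X 1, Y 1, Z 1, X 2, Y 2, Z 2] with hverts
    have hnine : ∀ k : Fin 9, k.castSucc ≠ (9 : Fin 10) := by decide
    refine ⟨fun v => if h' : ∃ k : Fin 9, alive (scol k.castSucc) ∧ verts k = v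
      then h'.choose.castSucc else 9, ?_, ?_, ?_⟩
    · intro i hi
      have hi3 : i = 0 ∨ i = 1 ∨ i = 2 := by omega
      have key : ∀ (v : V), (∃ k : Fin 9, alive (scol k.castSucc) ∧ verts k = v) →
          (if h' : ∃ k : Fin 9, alive (scol k.castSucc) ∧ verts k = v
            then h'.choose.castSucc else (9 : Fin 10)) ≠ 9 := by
        intro v hv
        rw [dif_pos hv]
        exact hnine _
      rcases hi3 with rfl | rfl | rfl
      · exact ⟨key _ ⟨0, by rw [show scol ((0:Fin 9).castSucc) = 0 from by decide]; exact ⟨hi, rfl⟩⟩,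
          key _ ⟨1, by rw [show scol ((1:Fin 9).castSucc) = 0 from by decide]; exact ⟨hi, rfl⟩⟩,
          key _ ⟨2, by rw [show scol ((2:Fin 9).castSucc) = 0 from by decide]; exact ⟨hi, rfl⟩⟩⟩
      · exact ⟨key _ ⟨3, by rw [show scol ((3:Fin 9).castSucc) = 1 from by decide]; exact ⟨hi, rfl⟩⟩,
          key _ ⟨4, by rw [show scol ((4:Fin 9).castSucc) = 1 from by decide]; exact ⟨hi, rfl⟩⟩,
          key _ ⟨5, by rw [show scol ((5:Fin 9).castSucc) = 1 from by decide]; exact ⟨hi, rfl⟩⟩⟩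
      · exact ⟨key _ ⟨6, by rw [show scol ((6:Fin 9).castSucc) = 2 from by decide]; exact ⟨hi, rfl⟩⟩,
          key _ ⟨7, by rw [show scol ((7:Fin 9).castSucc) = 2 from by decide]; exact ⟨hi, rfl⟩⟩,
          key _ ⟨8, by rw [show scol ((8:Fin 9).castSucc) = 2 from by decide]; exact ⟨hi, rfl⟩⟩⟩
    · intro v hv
      beta_reduce at hv ⊢
      by_cases h' : ∃ k : Fin 9, alive (scol k.castSucc) ∧ verts k = v
      · rw [dif_pos h'] at hv ⊢
        rw [hb]
        have := h'.choose_spec.1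
        simpa using this
      · rw [dif_neg h'] at hv
        exact absurd rfl hv
    · intro u v hu he
      beta_reduce at hu he
      by_cases h1 : ∃ k : Fin 9, alive (scol k.castSucc) ∧ verts k = u
      · by_cases h2 : ∃ k : Fin 9, alive (scol k.castSucc) ∧ verts k = v
        · rw [dif_pos h1, dif_pos h2] at he
          have hk : h1.choose = h2.choose := Fin.castSucc_injective _ he
          rw [← h1.choose_spec.2, ← h2.choose_spec.2, hk]
        · rw [dif_neg h2, dif_pos h1] at he
          exact absurd he (hnine _)
      · rw [dif_neg h1] at hu
        exact absurd rfl hu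
  -- vertices of chosen triangles are "inside"
  have outer : ∀ (m : Fin 3) (p q : V), alive m → G.Adj p q → c s(p,q) = m →
      φ p = 9 → φ q = 9 → False := by
    intro m p q hal hadj hcol hp hq
    obtain ⟨hx, hy, hz⟩ := hvert m hal
    refine F1 m (X m) (Y m) (Z m) p q (hT m hal) hadj hcol ?_ ?_ ?_ ?_ ?_ ?_ <;> rintro rfl <;>
      first | exact hx hp | exact hy hp | exact hz hp | exact hx hq | exact hy hq | exact hz hq
  -- the recolouring
  have hsym : ∀ x y : V,
      (fun x y : V => if φ x = 9 ∧ φ y = 9 then c s(x,y) else gmat bf (φ x) (φ y)) x y =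
      (fun x y : V => if φ x = 9 ∧ φ y = 9 then c s(x,y) else gmat bf (φ x) (φ y)) y x := by
    intro x y
    simp only []
    by_cases h' : φ x = 9 ∧ φ y = 9
    · rw [if_pos h', if_pos ⟨h'.2, h'.1⟩, Sym2.eq_swap]
    · rw [if_neg h', if_neg (fun hc => h' ⟨hc.2, hc.1⟩), gadget_sym]
  obtain ⟨m, mono⟩ := hG (Sym2.lift ⟨fun x y : V =>
    if φ x = 9 ∧ φ y = 9 then c s(x,y) else gmat bf (φ x) (φ y), hsym⟩)
  obtain ⟨u, v, w, huv, huw, hvw, euv, euw, evw⟩ := tri_of_mono mono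
  simp only [Sym2.lift_mk] at euv euw evw
  -- helper: one inside vertex, an outside edge
  have inside1 : ∀ (p q r : V), G.Adj q r → φ p ≠ 9 → φ q = 9 → φ r = 9 →
      gmat bf (φ p) 9 = m → c s(q,r) = m → False := by
    intro p q r hqr hp hq hr epq eqr
    have hm : alive m := by
      have hst := gadget_star bf (φ p) hp (hφcol p hp)
      rw [epq] at hst
      exact (hb m).1 hst
    exact outer m q r hm hqr eqr hq hr
  -- helper: at least two inside vertices
  have inside2 : ∀ (p q r : V), p ≠ q → p ≠ r → q ≠ r → φ q ≠ 9 → φ r ≠ 9 →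
      gmat bf (φ p) (φ q) = m → gmat bf (φ p) (φ r) = m → gmat bf (φ q) (φ r) = m → False := by
    intro p q r hpq hpr hqr hq hr e1 e2 e3
    have okp : gok bf (φ p) = true := by
      by_cases hp : φ p = 9
      · simp [gok, hp]
      · simp [gok, hφcol p hp]
    have dpq : φ p ≠ φ q := by
      intro e
      by_cases hp : φ p = 9
      · exact hq (by rw [← e, hp])
      · exact hpq (hφinj p q hp e)
    have dpr : φ p ≠ φ r := by
      intro e
      by_cases hp : φ p = 9
      · exact hr (by rw [← e, hp])
      · exact hpr (hφinj p r hp e)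
    have dqr : φ q ≠ φ r := fun e => hqr (hφinj q r hq e)
    exact gadget_tri bf (φ p) (φ q) (φ r) dpq dpr dqr okp
      (by simp [gok, hφcol q hq]) (by simp [gok, hφcol r hr])
      ⟨e1.trans e3.symm, e2.trans e3.symm⟩
  by_cases hu : φ u = 9
  · by_cases hv : φ v = 9
    · by_cases hw : φ w = 9
      · -- all three outside
        rw [if_pos ⟨hu, hv⟩] at euv
        rw [if_pos ⟨hu, hw⟩] at euw
        rw [if_pos ⟨hv, hw⟩] at evw
        exact outer m u v ⟨u, v, w, huv, huw, hvw, euv, euw, evw⟩ huv euv hu hv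
      · -- w inside, edge uv outside
        rw [if_pos ⟨hu, hv⟩] at euv
        rw [if_neg (fun hc => hw hc.2)] at euw
        rw [hu, gadget_sym] at euw
        exact inside1 w u v huv hw hu hv euw euv
    · by_cases hw : φ w = 9
      · -- v inside, edge uw outside
        rw [if_pos ⟨hu, hw⟩] at euw
        rw [if_neg (fun hc => hv hc.2)] at euv
        rw [hu, gadget_sym] at euv
        exact inside1 v u w huw hv hu hw euv euw
      · -- v, w inside
        rw [if_neg (fun hc => hv hc.2)] at euv
        rw [if_neg (fun hc => hw hc.2)] at euw
        rw [if_neg (fun hc => hv hc.1)] at evw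
        exact inside2 u v w huv.ne huw.ne hvw.ne hv hw euv euw evw
  · by_cases hv : φ v = 9
    · by_cases hw : φ w = 9
      · -- u inside, edge vw outside
        rw [if_pos ⟨hv, hw⟩] at evw
        rw [if_neg (fun hc => hu hc.1)] at euv
        rw [hv] at euv
        exact inside1 u v w hvw hu hv hw euv evw
      · -- u, w inside
        rw [if_neg (fun hc => hu hc.1)] at euv
        rw [if_neg (fun hc => hu hc.1)] at euw
        rw [if_neg (fun hc => hw hc.2)] at evw
        rw [gadget_sym] at euv
        exact inside2 v u w huv.ne.symm hvw.ne huw.ne hu hw euv evw euw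
    · -- u, v inside
      rw [if_neg (fun hc => hu hc.1)] at euv
      rw [if_neg (fun hc => hu hc.1)] at euw
      rw [if_neg (fun hc => hv hc.1)] at evw
      exact inside2 w u v huw.ne.symm hvw.ne.symm huv.ne hu hv
        (by rw [gadget_sym]; exact euw) (by rw [gadget_sym]; exact evw) euv


/-- Every graph `G` that is `3`-Ramsey for `K_3` is also `3`-Ramsey for
`K_3 + K_2`. -/
theorem stmt_2 {V : Type*} (G : SimpleGraph V)
    (hG : IsRamseyFor 3 G (completeGraph (Fin 3))) :
    IsRamseyFor 3 G (cliqueSum 3 2) := by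
  intro c
  by_contra hcon
  push_neg at hcon
  exact (main_aux G c hG hcon).elim
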